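/- Suppose A, B, k_1, k_4 are positive reals with A^2 k_1 < B k_4. Then there exists K > 0 such that for every k_8 > max(2 k_1, K) there exists κ > 0 such that for every K_M1 ∈ (0, κ), the function f(y) = k_1(A−y)^2 + k_8(A−y)y − B k_4 y/(K_M1 + y) has exactly three zeros y_1 < y_2 < y_3 in the open interval (0, A), and moreover f'(y_1) < 0, f'(y_2) > 0 and f'(y_3) < 0; that is, the ODE y' = f(y) has three hyperbolic steady states in (0,A), of which two are asymptotically stable and the other unstable. -/

import Mathlib

/-- A quadratic with three distinct roots is identically zero. -/
lemma quad_three_roots_zero {a b c x1 x2 x3 : ℝ} (h12 : x1 ≠ x2) (h13 : x1 ≠ x3)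
    (h23 : x2 ≠ x3)
    (h1 : a * x1 ^ 2 + b * x1 + c = 0) (h2 : a * x2 ^ 2 + b * x2 + c = 0)
    (h3 : a * x3 ^ 2 + b * x3 + c = 0) : a = 0 ∧ b = 0 ∧ c = 0 := by
  have k12 : a * (x1 + x2) + b = 0 := by
    have h : (x1 - x2) * (a * (x1 + x2) + b) = 0 := by linear_combination h1 - h2
    rcases mul_eq_zero.mp h with h | h
    · exact absurd (sub_eq_zero.mp h) h12
    · exact h
  have k13 : a * (x1 + x3) + b = 0 := by
    have h : (x1 - x3) * (a * (x1 + x3) + b) = 0 := by linear_combination h1 - h3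
    rcases mul_eq_zero.mp h with h | h
    · exact absurd (sub_eq_zero.mp h) h13
    · exact h
  have ha : a = 0 := by
    have h : (x2 - x3) * a = 0 := by linear_combination k12 - k13
    rcases mul_eq_zero.mp h with h | h
    · exact absurd (sub_eq_zero.mp h) h23
    · exact h
  have hb : b = 0 := by linear_combination k12 - (x1 + x2) * ha
  exact ⟨ha, hb, by linear_combination h1 - x1 ^ 2 * ha - x1 * hb⟩

set_option maxHeartbeats 2000000 in
/-- **Theorem 1 (Kreusser–Rendall).** If `A² k₁ < B k₄`, then for every sufficiently large
`k₈` (in particular `k₈ > 2 k₁`, i.e. `α > 2`) and every sufficiently small `K_M1 > 0`,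
the Doherty model `y' = f(y)` with
`f(y) = k₁ (A−y)² + k₈ (A−y) y − B k₄ y / (K_M1 + y)`
has exactly three steady states in `(0, A)`, all hyperbolic; the outer two are
asymptotically stable (`f' < 0`) and the middle one is unstable (`f' > 0`). -/
theorem doherty_bistability
    (A B k1 k4 : ℝ) (hA : 0 < A) (hB : 0 < B) (hk1 : 0 < k1) (hk4 : 0 < k4)
    (hlt : A ^ 2 * k1 < B * k4) :
    ∃ K > (0 : ℝ), ∀ k8 : ℝ, k8 > max (2 * k1) K →
      ∃ κ > (0 : ℝ), ∀ KM1 : ℝ, KM1 ∈ Set.Ioo (0 : ℝ) κ →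
        ∃ y1 y2 y3 : ℝ,
          (fun f : ℝ → ℝ =>
            0 < y1 ∧ y1 < y2 ∧ y2 < y3 ∧ y3 < A ∧
            (∀ y ∈ Set.Ioo (0 : ℝ) A, (f y = 0 ↔ (y = y1 ∨ y = y2 ∨ y = y3))) ∧
            deriv f y1 < 0 ∧ deriv f y2 > 0 ∧ deriv f y3 < 0)
          (fun y => k1 * (A - y) ^ 2 + k8 * (A - y) * y - B * k4 * y / (KM1 + y)) := by
  refine ⟨4 * B * k4 / A ^ 2, by positivity, ?_⟩
  intro k8 hk8
  have hk82 : 2 * k1 < k8 := lt_of_le_of_lt (le_max_left _ _) hk8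
  have hk8K : 4 * B * k4 / A ^ 2 < k8 := lt_of_le_of_lt (le_max_right _ _) hk8
  have hk8pos : 0 < k8 := lt_trans (by positivity) hk8K
  have hk8A2 : 4 * B * k4 < k8 * A ^ 2 := by
    rw [div_lt_iff₀ (by positivity)] at hk8K; linarith
  obtain ⟨ε, hεdef⟩ : ∃ ε : ℝ, ε = (B * k4 - A ^ 2 * k1) / 2 := ⟨_, rfl⟩
  have hεpos : 0 < ε := by rw [hεdef]; linarith
  have hεlt : ε < B * k4 / 2 := by
    rw [hεdef]; nlinarith [mul_pos (mul_pos hA hA) hk1]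
  obtain ⟨b, hbdef⟩ : ∃ b : ℝ, b = ε / (k8 * A) := ⟨_, rfl⟩
  have hbpos : 0 < b := by rw [hbdef]; positivity
  refine ⟨ε * b / (B * k4), by positivity, ?_⟩
  rintro KM1 ⟨hKM1pos, hKM1lt⟩
  have hbA : b < A / 2 := by
    rw [hbdef, div_lt_iff₀ (by positivity)]
    nlinarith [mul_pos hB hk4]
  -- the function
  set f : ℝ → ℝ := fun y => k1 * (A - y) ^ 2 + k8 * (A - y) * y - B * k4 * y / (KM1 + y)
    with hfdef
  have hcont : ContinuousOn f (Set.Icc 0 A) := by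
    apply ContinuousOn.sub
    · exact Continuous.continuousOn (by fun_prop)
    · apply ContinuousOn.div (Continuous.continuousOn (by fun_prop))
        (Continuous.continuousOn (by fun_prop))
      intro x hx
      have : (0:ℝ) ≤ x := hx.1
      positivity
  -- sign facts
  have hf0 : 0 < f 0 := by
    simp only [hfdef]
    norm_num
    positivity
  have hk8Ab : k8 * A * b = ε := by
    rw [hbdef]; field_simp
  have hKM1b : B * k4 * KM1 < ε * b := by
    calc B * k4 * KM1 < B * k4 * (ε * b / (B * k4)) := by
          apply mul_lt_mul_of_pos_left hKM1lt (by positivity)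
      _ = ε * b := by field_simp
  have hfb : f b < 0 := by
    simp only [hfdef]
    have h3 : B * k4 - ε < B * k4 * b / (KM1 + b) := by
      rw [lt_div_iff₀ (by positivity)]
      nlinarith
    have hAb : 0 < A - b := by linarith
    have h4 : k1 * (A - b) ^ 2 ≤ k1 * A ^ 2 := by
      nlinarith [mul_pos hbpos (show 0 < 2 * A - b by linarith), hk1.le]
    have h5 : k8 * (A - b) * b < ε := by
      have he : k8 * (A - b) * b = ε - k8 * b ^ 2 := by linear_combination hk8Ab
      have hb2 : 0 < k8 * b ^ 2 := by positivity
      linarith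
    have h2ε : 2 * ε = B * k4 - A ^ 2 * k1 := by rw [hεdef]; ring
    linarith
  have hfc : 0 < f (A / 2) := by
    simp only [hfdef]
    have hd : B * k4 * (A / 2) / (KM1 + A / 2) < B * k4 := by
      rw [div_lt_iff₀ (by positivity)]
      have := mul_lt_mul_of_pos_left (show A / 2 < KM1 + A / 2 by linarith)
        (mul_pos hB hk4)
      linarith
    have hq : k1 * (A - A / 2) ^ 2 + k8 * (A - A / 2) * (A / 2)
        = k1 * A ^ 2 / 4 + k8 * A ^ 2 / 4 := by ring
    have hk1A : 0 < k1 * A ^ 2 := by positivity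
    linarith
  have hfA : f A < 0 := by
    have h : f A = -(B * k4 * A / (KM1 + A)) := by
      simp only [hfdef]; ring
    rw [h]
    have : 0 < B * k4 * A / (KM1 + A) := by positivity
    linarith
  -- three roots by IVT
  obtain ⟨y1, hy1mem, hy1⟩ := intermediate_value_Ioo' (le_of_lt hbpos)
    (hcont.mono (Set.Icc_subset_Icc le_rfl (by linarith)))
    (Set.mem_Ioo.mpr ⟨hfb, hf0⟩)
  obtain ⟨y2, hy2mem, hy2⟩ := intermediate_value_Ioo (le_of_lt hbA)
    (hcont.mono (Set.Icc_subset_Icc (le_of_lt hbpos) (by linarith)))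
    (Set.mem_Ioo.mpr ⟨hfb, hfc⟩)
  obtain ⟨y3, hy3mem, hy3⟩ := intermediate_value_Ioo' (by linarith : A / 2 ≤ A)
    (hcont.mono (Set.Icc_subset_Icc (by linarith) le_rfl))
    (Set.mem_Ioo.mpr ⟨hfA, hfc⟩)
  obtain ⟨hy10, hy1b⟩ := hy1mem
  obtain ⟨hy2b, hy2c⟩ := hy2mem
  obtain ⟨hy3c, hy3A⟩ := hy3mem
  have h12 : y1 < y2 := lt_trans hy1b hy2b
  have h23 : y2 < y3 := lt_trans hy2c hy3c
  have h13 : y1 < y3 := lt_trans h12 h23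
  have hden1 : (0:ℝ) < KM1 + y1 := by linarith
  have hden2 : (0:ℝ) < KM1 + y2 := by linarith
  have hden3 : (0:ℝ) < KM1 + y3 := by linarith
  -- roots of the cubic P
  have hroot : ∀ y : ℝ, 0 < KM1 + y → f y = 0 →
      (KM1 + y) * (k1 * (A - y) ^ 2 + k8 * (A - y) * y) - B * k4 * y = 0 := by
    intro y hy hfy
    simp only [hfdef] at hfy
    have key : B * k4 * y / (KM1 + y) = k1 * (A - y) ^ 2 + k8 * (A - y) * y := by
      linarith
    have key2 : B * k4 * y = (k1 * (A - y) ^ 2 + k8 * (A - y) * y) * (KM1 + y) :=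
      (div_eq_iff (ne_of_gt hy)).mp key
    linear_combination -key2
  have hP1 := hroot y1 hden1 hy1
  have hP2 := hroot y2 hden2 hy2
  have hP3 := hroot y3 hden3 hy3
  -- coefficient identities via the quadratic lemma
  obtain ⟨e1, e2, e3⟩ := quad_three_roots_zero (ne_of_lt h12) (ne_of_lt h13) (ne_of_lt h23)
    (show ((k8 - 2 * k1) * A + KM1 * (k1 - k8) + (k1 - k8) * (y1 + y2 + y3)) * y1 ^ 2 +
        (k1 * A ^ 2 + KM1 * A * (k8 - 2 * k1) - B * k4
          - (k1 - k8) * (y1 * y2 + y1 * y3 + y2 * y3)) * y1 +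
        (KM1 * k1 * A ^ 2 + (k1 - k8) * (y1 * y2 * y3)) = 0 by linear_combination hP1)
    (show ((k8 - 2 * k1) * A + KM1 * (k1 - k8) + (k1 - k8) * (y1 + y2 + y3)) * y2 ^ 2 +
        (k1 * A ^ 2 + KM1 * A * (k8 - 2 * k1) - B * k4
          - (k1 - k8) * (y1 * y2 + y1 * y3 + y2 * y3)) * y2 +
        (KM1 * k1 * A ^ 2 + (k1 - k8) * (y1 * y2 * y3)) = 0 by linear_combination hP2)
    (show ((k8 - 2 * k1) * A + KM1 * (k1 - k8) + (k1 - k8) * (y1 + y2 + y3)) * y3 ^ 2 +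
        (k1 * A ^ 2 + KM1 * A * (k8 - 2 * k1) - B * k4
          - (k1 - k8) * (y1 * y2 + y1 * y3 + y2 * y3)) * y3 +
        (KM1 * k1 * A ^ 2 + (k1 - k8) * (y1 * y2 * y3)) = 0 by linear_combination hP3)
  have hc3 : k1 - k8 < 0 := by linarith
  -- derivative formula
  have hder : ∀ y : ℝ, KM1 + y ≠ 0 → HasDerivAt f
      (k8 * (A - 2 * y) - 2 * k1 * (A - y) - B * k4 * KM1 / (KM1 + y) ^ 2) y := by
    intro y hy
    have hid := hasDerivAt_id y
    have hsub : HasDerivAt (fun x : ℝ => A - x) (-1) y := hid.const_sub A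
    have h1 : HasDerivAt (fun x : ℝ => k1 * (A - x) ^ 2) (k1 * (2 * (A - y) ^ 1 * (-1))) y :=
      (hsub.pow 2).const_mul k1
    have h2 : HasDerivAt (fun x : ℝ => k8 * ((A - x) * x)) (k8 * ((-1) * y + (A - y) * 1)) y :=
      (hsub.mul hid).const_mul k8
    have hnum : HasDerivAt (fun x : ℝ => B * k4 * x) (B * k4) y := by
      simpa using hid.const_mul (B * k4)
    have hden' : HasDerivAt (fun x : ℝ => KM1 + x) 1 y := hid.const_add KM1
    have h3 : HasDerivAt (fun x : ℝ => B * k4 * x / (KM1 + x))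
        ((B * k4 * (KM1 + y) - B * k4 * y * 1) / (KM1 + y) ^ 2) y := hnum.div hden' hy
    have H := (h1.add h2).sub h3
    have hfeq : f = ((fun x : ℝ => k1 * (A - x) ^ 2) + fun x : ℝ => k8 * ((A - x) * x)) -
        fun x : ℝ => B * k4 * x / (KM1 + x) := by
      funext x; simp only [hfdef, Pi.add_apply, Pi.sub_apply]; ring
    rw [hfeq]
    refine H.congr_deriv ?_
    field_simp
    ring
  have hd1 := (hder y1 (ne_of_gt hden1)).deriv
  have hd2 := (hder y2 (ne_of_gt hden2)).deriv
  have hd3 := (hder y3 (ne_of_gt hden3)).deriv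
  refine ⟨y1, y2, y3, hy10, h12, h23, hy3A, ?_, ?_, ?_, ?_⟩
  · -- exactness of the three roots
    rintro y ⟨hy0, hyA⟩
    have hdeny : (0:ℝ) < KM1 + y := by linarith
    constructor
    · intro hfy
      have hPy := hroot y hdeny hfy
      have hfac : (k1 - k8) * ((y - y1) * ((y - y2) * (y - y3))) = 0 := by
        linear_combination hPy - y ^ 2 * e1 - y * e2 - e3
      rcases mul_eq_zero.mp hfac with h | h
      · exact absurd h (ne_of_lt hc3)
      rcases mul_eq_zero.mp h with h | h
      · exact Or.inl (sub_eq_zero.mp h)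
      rcases mul_eq_zero.mp h with h | h
      · exact Or.inr (Or.inl (sub_eq_zero.mp h))
      · exact Or.inr (Or.inr (sub_eq_zero.mp h))
    · rintro (rfl | rfl | rfl)
      · exact hy1
      · exact hy2
      · exact hy3
  · -- f'(y1) < 0
    rw [hd1]
    have key : (k8 * (A - 2 * y1) - 2 * k1 * (A - y1)) * (KM1 + y1) ^ 2 - B * k4 * KM1 =
        (k1 - k8) * (y1 - y2) * (y1 - y3) * (KM1 + y1) := by
      linear_combination (2 * y1 * (KM1 + y1) - y1 ^ 2) * e1 + KM1 * e2 - e3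
    have hrhs : (k1 - k8) * (y1 - y2) * (y1 - y3) * (KM1 + y1) < 0 := by
      apply mul_neg_of_neg_of_pos _ hden1
      exact mul_neg_of_pos_of_neg (mul_pos_of_neg_of_neg hc3 (by linarith)) (by linarith)
    have hmul : (k8 * (A - 2 * y1) - 2 * k1 * (A - y1) - B * k4 * KM1 / (KM1 + y1) ^ 2) *
        (KM1 + y1) ^ 2 < 0 := by
      have hexp : (k8 * (A - 2 * y1) - 2 * k1 * (A - y1) - B * k4 * KM1 / (KM1 + y1) ^ 2) *
          (KM1 + y1) ^ 2 =
          (k8 * (A - 2 * y1) - 2 * k1 * (A - y1)) * (KM1 + y1) ^ 2 - B * k4 * KM1 := by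
        field_simp
      rw [hexp, key]; exact hrhs
    by_contra h
    push_neg at h
    exact absurd (mul_nonneg h (sq_nonneg (KM1 + y1))) (not_le.mpr hmul)
  · -- f'(y2) > 0
    rw [hd2]
    have key : (k8 * (A - 2 * y2) - 2 * k1 * (A - y2)) * (KM1 + y2) ^ 2 - B * k4 * KM1 =
        (k1 - k8) * (y2 - y1) * (y2 - y3) * (KM1 + y2) := by
      linear_combination (2 * y2 * (KM1 + y2) - y2 ^ 2) * e1 + KM1 * e2 - e3
    have hrhs : 0 < (k1 - k8) * (y2 - y1) * (y2 - y3) * (KM1 + y2) := by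
      apply mul_pos _ hden2
      exact mul_pos_of_neg_of_neg (mul_neg_of_neg_of_pos hc3 (by linarith)) (by linarith)
    have hmul : 0 < (k8 * (A - 2 * y2) - 2 * k1 * (A - y2) - B * k4 * KM1 / (KM1 + y2) ^ 2) *
        (KM1 + y2) ^ 2 := by
      have hexp : (k8 * (A - 2 * y2) - 2 * k1 * (A - y2) - B * k4 * KM1 / (KM1 + y2) ^ 2) *
          (KM1 + y2) ^ 2 =
          (k8 * (A - 2 * y2) - 2 * k1 * (A - y2)) * (KM1 + y2) ^ 2 - B * k4 * KM1 := by
        field_simp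
      rw [hexp, key]; exact hrhs
    by_contra h
    push_neg at h
    exact absurd (mul_nonpos_of_nonpos_of_nonneg h (sq_nonneg (KM1 + y2)))
      (not_le.mpr hmul)
  · -- f'(y3) < 0
    rw [hd3]
    have key : (k8 * (A - 2 * y3) - 2 * k1 * (A - y3)) * (KM1 + y3) ^ 2 - B * k4 * KM1 =
        (k1 - k8) * (y3 - y1) * (y3 - y2) * (KM1 + y3) := by
      linear_combination (2 * y3 * (KM1 + y3) - y3 ^ 2) * e1 + KM1 * e2 - e3
    have hrhs : (k1 - k8) * (y3 - y1) * (y3 - y2) * (KM1 + y3) < 0 := by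
      apply mul_neg_of_neg_of_pos _ hden3
      exact mul_neg_of_neg_of_pos (mul_neg_of_neg_of_pos hc3 (by linarith)) (by linarith)
    have hmul : (k8 * (A - 2 * y3) - 2 * k1 * (A - y3) - B * k4 * KM1 / (KM1 + y3) ^ 2) *
        (KM1 + y3) ^ 2 < 0 := by
      have hexp : (k8 * (A - 2 * y3) - 2 * k1 * (A - y3) - B * k4 * KM1 / (KM1 + y3) ^ 2) *
          (KM1 + y3) ^ 2 =
          (k8 * (A - 2 * y3) - 2 * k1 * (A - y3)) * (KM1 + y3) ^ 2 - B * k4 * KM1 := by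
        field_simp
      rw [hexp, key]; exact hrhs
    by_contra h
    push_neg at h
    exact absurd (mul_nonneg h (sq_nonneg (KM1 + y3))) (not_le.mpr hmul)
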